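/- arXiv:1112.5860 — 2 statements merged into one kernel-verified Lean document; each statement's English description precedes it below -/
import Mathlib

section
/- Given three hyperplanes in projective d-space: α tangent to a nondegenerate quadric Q1 and β tangent to a nondegenerate quadric Q2, with α ≠ β, and assuming the tangency quadratic form on the pencil spanned by α and β is nondegenerate for both Q1 and Q2, there exist unique hyperplanes α' ≠ α tangent to Q1 and β' ≠ β tangent to Q2 within the pencil spanned by α and β. -/
open Matrix

lemma symm_dot_aux {K : Type*} [Field K] {n : ℕ} (A : Matrix (Fin n) (Fin n) K)
    (hA : A.IsSymm) (x y : Fin n → K) : A.mulVec x ⬝ᵥ y = A.mulVec y ⬝ᵥ x := by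
  rw [dotProduct_comm, dotProduct_mulVec, ← mulVec_transpose, hA.eq, dotProduct_comm]

lemma lin_unique {K : Type*} [Field K] (c e : K) (hc : c ≠ 0) :
    ∃! t : K, c * t + e = 0 := by
  refine ⟨-e / c, by field_simp; ring, fun y hy => ?_⟩
  field_simp
  linear_combination hy

/-- Given hyperplanes `a` tangent to `Q1` and `b` tangent to `Q2`, with the tangency
quadratic on the pencil `λa+μb` nondegenerate for both quadrics, there is a unique
hyperplane `a' ≠ a` in the pencil tangent to `Q1` (parametrized as `t•a + b`), and a
unique `b' ≠ b` tangent to `Q2` (parametrized as `a + s•b`). -/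
theorem stmt_5 {K : Type*} [Field K] [IsAlgClosed K] (hchar : (2 : K) ≠ 0) (d : ℕ)
    (Q1 Q2 : Matrix (Fin (d + 1)) (Fin (d + 1)) K)
    (h1 : Q1.IsSymm) (h2 : Q2.IsSymm) (hd1 : IsUnit Q1.det) (hd2 : IsUnit Q2.det)
    (a b : Fin (d + 1) → K) (hab : LinearIndependent K ![a, b])
    (hta : Q1⁻¹.mulVec a ⬝ᵥ a = 0) (htb : Q2⁻¹.mulVec b ⬝ᵥ b = 0)
    (hnd1 : (Q1⁻¹.mulVec a ⬝ᵥ b) ^ 2 - (Q1⁻¹.mulVec a ⬝ᵥ a) * (Q1⁻¹.mulVec b ⬝ᵥ b) ≠ 0)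
    (hnd2 : (Q2⁻¹.mulVec a ⬝ᵥ b) ^ 2 - (Q2⁻¹.mulVec a ⬝ᵥ a) * (Q2⁻¹.mulVec b ⬝ᵥ b) ≠ 0) :
    (∃! t : K, Q1⁻¹.mulVec (t • a + b) ⬝ᵥ (t • a + b) = 0) ∧
    (∃! s : K, Q2⁻¹.mulVec (a + s • b) ⬝ᵥ (a + s • b) = 0) := by
  have hs1 : Q1⁻¹.IsSymm := by rw [Matrix.IsSymm, Matrix.transpose_nonsing_inv, h1.eq]
  have hs2 : Q2⁻¹.IsSymm := by rw [Matrix.IsSymm, Matrix.transpose_nonsing_inv, h2.eq]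
  have e1 : Q1⁻¹.mulVec b ⬝ᵥ a = Q1⁻¹.mulVec a ⬝ᵥ b := symm_dot_aux _ hs1 b a
  have e2 : Q2⁻¹.mulVec b ⬝ᵥ a = Q2⁻¹.mulVec a ⬝ᵥ b := symm_dot_aux _ hs2 b a
  have hc1 : Q1⁻¹.mulVec a ⬝ᵥ b ≠ 0 := by
    intro h; apply hnd1; rw [h, hta]; ring
  have hc2 : Q2⁻¹.mulVec a ⬝ᵥ b ≠ 0 := by
    intro h; apply hnd2; rw [h, htb]; ring
  constructor
  · have key : ∀ t : K, Q1⁻¹.mulVec (t • a + b) ⬝ᵥ (t • a + b)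
        = (2 * (Q1⁻¹.mulVec a ⬝ᵥ b)) * t + Q1⁻¹.mulVec b ⬝ᵥ b := by
      intro t
      simp only [mulVec_add, mulVec_smul, add_dotProduct, dotProduct_add,
        smul_dotProduct, dotProduct_smul, smul_eq_mul, hta, e1]
      ring
    simp only [key]
    exact lin_unique _ _ (mul_ne_zero hchar hc1)
  · have key : ∀ s : K, Q2⁻¹.mulVec (a + s • b) ⬝ᵥ (a + s • b)
        = (2 * (Q2⁻¹.mulVec a ⬝ᵥ b)) * s + Q2⁻¹.mulVec a ⬝ᵥ a := by
      intro s
      simp only [mulVec_add, mulVec_smul, add_dotProduct, dotProduct_add,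
        smul_dotProduct, dotProduct_smul, smul_eq_mul, htb, e2]
      ring
    simp only [key]
    exact lin_unique _ _ (mul_ne_zero hchar hc2)
end

section
/- Chasles' theorem in the plane for the dual pencil: a generic line ℓ in CP² is tangent to exactly d−1 = 1 quadric of a confocal family; more generally in CP^d, the tangency condition of a fixed generic line ℓ to the confocal family Q_λ is a polynomial equation of degree d−1 in λ, hence a generic line is tangent to exactly d−1 quadrics of the family counted with multiplicity. -/
open Polynomial in
/-- Chasles' theorem: for a generic line `t ↦ p + t•v` in `CP^d`, the discriminant of
the intersection with the confocal quadric `Q_λ : ∑ xᵢ²/(aᵢ−λ) = 1` (after clearing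
denominators) is divisible by `∏(aᵢ−λ)`, and the quotient is a polynomial in `λ` of
degree exactly `d−1`; hence a generic line is tangent to exactly `d−1` quadrics of the
family, counted with multiplicity. -/
theorem stmt_11 (d : ℕ) (hd : 1 ≤ d) (a p v : Fin d → ℂ)
    (ha : Function.Injective a) (hv : (∑ i, (v i) ^ 2) ≠ 0) :
    ∃ P : Polynomial ℂ,
      ((∑ i, C (2 * p i * v i) *
          ∏ j ∈ Finset.univ.erase i, (C (a j) - X)) ^ 2
        - 4 * (∑ i, C ((v i) ^ 2) * ∏ j ∈ Finset.univ.erase i, (C (a j) - X))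
            * ((∑ i, C ((p i) ^ 2) * ∏ j ∈ Finset.univ.erase i, (C (a j) - X))
                - ∏ j, (C (a j) - X)))
        = (∏ j, (C (a j) - X)) * P
      ∧ P.natDegree = d - 1 ∧ Multiset.card P.roots = d - 1 := by
  classical
  set π : ℂ[X] := ∏ j, (C (a j) - X) with hπ
  set πi : Fin d → ℂ[X] := fun i => ∏ j ∈ Finset.univ.erase i, (C (a j) - X) with hπi
  set B : ℂ[X] := ∑ i, C (2 * p i * v i) * πi i with hB
  set A : ℂ[X] := ∑ i, C ((v i) ^ 2) * πi i with hA
  set Q : ℂ[X] := ∑ i, C ((p i) ^ 2) * πi i with hQ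
  set D : ℂ[X] := B ^ 2 - 4 * A * (Q - π) with hD
  -- basic facts about the linear factors
  have hfac_nat : ∀ c : ℂ, (C c - X : ℂ[X]).natDegree = 1 := by
    intro c
    have : (C c - X : ℂ[X]) = -(X - C c) := by ring
    rw [this, natDegree_neg, natDegree_X_sub_C]
  have hfac_ne : ∀ c : ℂ, (C c - X : ℂ[X]) ≠ 0 := by
    intro c h
    have := hfac_nat c
    rw [h] at this
    simp at this
  have hfac_lead : ∀ c : ℂ, (C c - X : ℂ[X]).leadingCoeff = -1 := by
    intro c
    rw [leadingCoeff, hfac_nat]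
    simp
  -- degrees of the products
  have hcard : ∀ i : Fin d, (Finset.univ.erase i).card = d - 1 := by
    intro i
    rw [Finset.card_erase_of_mem (Finset.mem_univ i)]
    simp
  have hπi_nat : ∀ i, (πi i).natDegree = d - 1 := by
    intro i
    rw [hπi]
    rw [natDegree_prod _ _ (fun j _ => hfac_ne (a j))]
    simp [hfac_nat, hcard i]
  have hπi_lead : ∀ i, (πi i).leadingCoeff = (-1 : ℂ) ^ (d - 1) := by
    intro i
    rw [hπi]
    rw [leadingCoeff_prod]
    simp [hfac_lead, hcard i]
  have hπ_nat : π.natDegree = d := by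
    rw [hπ, natDegree_prod _ _ (fun j _ => hfac_ne (a j))]
    simp [hfac_nat]
  have hπ_lead : π.leadingCoeff = (-1 : ℂ) ^ d := by
    rw [hπ, leadingCoeff_prod]
    simp [hfac_lead]
  have hπ_ne : π ≠ 0 := by
    rw [hπ, Finset.prod_ne_zero_iff]
    exact fun j _ => hfac_ne (a j)
  -- degree bounds for the sums
  have hsum_le : ∀ c : Fin d → ℂ, (∑ i, C (c i) * πi i).natDegree ≤ d - 1 := by
    intro c
    refine Polynomial.natDegree_sum_le_of_forall_le _ _ (fun i _ => ?_)
    calc (C (c i) * πi i).natDegree ≤ (C (c i)).natDegree + (πi i).natDegree :=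
          natDegree_mul_le
      _ ≤ d - 1 := by simp [hπi_nat i]
  -- the (d-1) coefficient of such a sum
  have hsum_coeff : ∀ c : Fin d → ℂ,
      (∑ i, C (c i) * πi i).coeff (d - 1) = (-1 : ℂ) ^ (d - 1) * ∑ i, c i := by
    intro c
    rw [finset_sum_coeff]
    rw [Finset.mul_sum]
    refine Finset.sum_congr rfl (fun i _ => ?_)
    rw [coeff_C_mul]
    have : (πi i).coeff (d - 1) = (πi i).leadingCoeff := by
      rw [leadingCoeff, hπi_nat i]
    rw [this, hπi_lead i]
    ring
  -- A has degree exactly d-1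
  have hA_coeff : A.coeff (d - 1) = (-1 : ℂ) ^ (d - 1) * ∑ i, (v i) ^ 2 := hsum_coeff _
  have hA_coeff_ne : A.coeff (d - 1) ≠ 0 := by
    rw [hA_coeff]
    exact mul_ne_zero (pow_ne_zero _ (by norm_num)) hv
  have hA_nat : A.natDegree = d - 1 :=
    le_antisymm (hsum_le _) (le_natDegree_of_ne_zero hA_coeff_ne)
  have hA_ne : A ≠ 0 := fun h => hA_coeff_ne (by rw [h]; simp)
  -- Q - π has degree exactly d
  have hQ_lt : Q.natDegree < π.natDegree := by
    rw [hπ_nat]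
    exact lt_of_le_of_lt (hsum_le _) (by omega)
  have hC_nat : (Q - π).natDegree = d := by
    rw [natDegree_sub_eq_right_of_natDegree_lt hQ_lt, hπ_nat]
  have hC_ne : Q - π ≠ 0 := by
    intro h
    have := hC_nat
    rw [h] at this
    simp at this
    omega
  -- degree of 4 * A * (Q - π)
  have h4 : (4 : ℂ[X]) ≠ 0 := by norm_num
  have hM_nat : (4 * A * (Q - π)).natDegree = 2 * d - 1 := by
    rw [natDegree_mul (mul_ne_zero h4 hA_ne) hC_ne, natDegree_mul h4 hA_ne]
    have : (4 : ℂ[X]).natDegree = 0 := natDegree_ofNat 4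
    rw [this, hA_nat, hC_nat]
    omega
  -- degree of B^2
  have hB2_nat : (B ^ 2).natDegree < 2 * d - 1 := by
    rw [natDegree_pow]
    have := hsum_le (fun i => 2 * p i * v i)
    rw [← hB] at this
    omega
  have hD_nat : D.natDegree = 2 * d - 1 := by
    rw [hD, natDegree_sub_eq_right_of_natDegree_lt (by rw [hM_nat]; exact hB2_nat), hM_nat]
  have hD_ne : D ≠ 0 := by
    intro h
    rw [h, natDegree_zero] at hD_nat
    omega
  -- divisibility of D by π
  have hdvd : π ∣ D := by
    rw [hπ]
    refine Finset.prod_dvd_of_coprime (fun i _ j _ hij => ?_) (fun k _ => ?_)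
    · have := (Polynomial.pairwise_coprime_X_sub_C ha) hij
      have e1 : (C (a i) - X : ℂ[X]) = -(X - C (a i)) := by ring
      have e2 : (C (a j) - X : ℂ[X]) = -(X - C (a j)) := by ring
      rw [Function.onFun, e1, e2]
      exact this.neg_left.neg_right
    · have e : (C (a k) - X : ℂ[X]) = -(X - C (a k)) := by ring
      rw [e, neg_dvd, dvd_iff_isRoot]
      have hev : ∀ c : Fin d → ℂ,
          eval (a k) (∑ i, C (c i) * πi i) = c k * eval (a k) (πi k) := by
        intro c
        rw [eval_finset_sum]
        have h0 : ∀ i ∈ Finset.univ, i ≠ k → eval (a k) (C (c i) * πi i) = 0 := by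
          intro i _ hik
          rw [eval_mul, eval_C, hπi]
          simp only
          rw [eval_prod]
          have : ∏ j ∈ Finset.univ.erase i, eval (a k) (C (a j) - X) = 0 :=
            Finset.prod_eq_zero (Finset.mem_erase.2 ⟨Ne.symm hik, Finset.mem_univ k⟩)
              (by simp)
          rw [this, mul_zero]
        rw [Finset.sum_eq_single_of_mem k (Finset.mem_univ k) h0, eval_mul, eval_C]
      have hevπ : eval (a k) π = 0 := by
        rw [hπ, eval_prod]
        exact Finset.prod_eq_zero (Finset.mem_univ k)
          (by simp only [eval_sub, eval_C, eval_X, sub_self])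
      have : IsRoot D (a k) := by
        rw [IsRoot, hD]
        simp only [eval_sub, eval_pow, eval_mul, eval_ofNat, hB, hA, hQ, hev, hevπ]
        ring
      exact this
  obtain ⟨P, hP⟩ := hdvd
  refine ⟨P, hP, ?_, ?_⟩
  · have hP_ne : P ≠ 0 := by
      intro h
      rw [h, mul_zero] at hP
      exact hD_ne hP
    have := hD_nat
    rw [hP, natDegree_mul hπ_ne hP_ne, hπ_nat] at this
    omega
  · have hP_ne : P ≠ 0 := by
      intro h
      rw [h, mul_zero] at hP
      exact hD_ne hP
    have hsplit : Multiset.card P.roots = P.natDegree :=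
      (Polynomial.splits_iff_card_roots).1 (IsAlgClosed.splits P)
    rw [hsplit]
    have := hD_nat
    rw [hP, natDegree_mul hπ_ne hP_ne, hπ_nat] at this
    omega
end
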